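/- For every integer d ≥ 0, the minimum of ∫ p(x)² dγ(x) over all real polynomials p of degree at most d with p(0) = 1 equals (∑_{i=0}^d He_i(0)²/i!)^{-1}, where γ is the standard Gaussian measure N(0,1) on ℝ and He_i is the i-th probabilists' Hermite polynomial. That is, every such p satisfies ∫ p² dγ ≥ (∑_{i=0}^d He_i(0)²/i!)^{-1}, and some polynomial of degree at most d with p(0) = 1 attains this value. -/

import Mathlib

open MeasureTheory ProbabilityTheory Polynomial Real Filter
open scoped ENNReal NNReal

noncomputable section StmtAux

namespace StmtAux

lemma derivative_hermite (n : ℕ) :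
    derivative (hermite (n + 1)) = C ((n : ℤ) + 1) * hermite n := by
  induction n with
  | zero => simp [hermite_one, hermite_zero]
  | succ n ih =>
      rw [hermite_succ (n + 1), derivative_sub, derivative_mul, derivative_X, one_mul, ih,
        derivative_mul, derivative_C, hermite_succ n]
      push_cast
      simp only [map_add, map_one, zero_mul, zero_add]
      ring

/-- real Hermite polynomial -/
def H (n : ℕ) : ℝ[X] := (hermite n).map (Int.castRingHom ℝ)

lemma H_zero : H 0 = 1 := by simp [H, hermite_zero]

lemma H_succ (n : ℕ) : H (n + 1) = X * H n - derivative (H n) := by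
  simp [H, hermite_succ n, Polynomial.derivative_map]

lemma derivative_H (n : ℕ) : derivative (H (n + 1)) = C ((n : ℝ) + 1) * H n := by
  rw [H, derivative_map, derivative_hermite, Polynomial.map_mul, map_C]
  norm_num [H]

lemma natDegree_H (n : ℕ) : (H n).natDegree = n := by
  have : (H n).natDegree = (hermite n).natDegree := by
    apply natDegree_map_eq_of_injective
    exact Int.cast_injective
  rw [this, natDegree_hermite]

lemma eval_H_zero (n : ℕ) : (H n).eval 0 = (((hermite n).eval 0 : ℤ) : ℝ) := by
  simp [H, eval_map, eval₂_at_apply, coeff_zero_eq_eval_zero]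

/-- the gaussian weight -/
def g (x : ℝ) : ℝ := rexp (-(x ^ 2 / 2))

lemma g_eq (x : ℝ) : g x = rexp (-(1/2) * x ^ 2) := by rw [g]; ring_nf

lemma tendsto_poly_g_atTop (p : ℝ[X]) :
    Tendsto (fun x => p.eval x * g x) atTop (nhds 0) := by
  have h0 : Tendsto (fun x => ‖p.eval x / rexp x‖) atTop (nhds 0) := by
    simpa using p.tendsto_div_exp_atTop.norm
  refine squeeze_zero_norm' ?_ h0
  filter_upwards [eventually_ge_atTop (2 : ℝ)] with x hx
  have h1 : ‖g x‖ ≤ ‖(rexp x)⁻¹‖ := by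
    rw [g, Real.norm_eq_abs, Real.norm_eq_abs, abs_of_pos (Real.exp_pos _),
      abs_of_pos (by positivity), ← Real.exp_neg]
    apply Real.exp_le_exp.2
    nlinarith
  rw [norm_mul, div_eq_mul_inv, norm_mul]
  exact mul_le_mul_of_nonneg_left h1 (norm_nonneg _)

lemma g_even (x : ℝ) : g (-x) = g x := by simp [g]

lemma tendsto_poly_g_atBot (p : ℝ[X]) :
    Tendsto (fun x => p.eval x * g x) atBot (nhds 0) := by
  have h := (tendsto_poly_g_atTop (p.comp (-X))).comp tendsto_neg_atBot_atTop
  refine h.congr fun x => ?_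
  simp [Function.comp, g_even]

lemma integrable_poly_g (p : ℝ[X]) :
    Integrable (fun x => p.eval x * g x) := by
  induction p using Polynomial.induction_on' with
  | monomial n c =>
      have h := integrable_rpow_mul_exp_neg_mul_sq (b := 1/2) (by norm_num)
        (s := (n : ℝ)) (lt_of_lt_of_le neg_one_lt_zero (Nat.cast_nonneg n))
      simp only [Real.rpow_natCast] at h
      have h2 : Integrable (fun x : ℝ => x ^ n * g x) := by
        have he : (fun x : ℝ => x ^ n * g x)
            = fun x => x ^ n * rexp (-(1/2) * x ^ 2) := funext fun x => by rw [g_eq]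
        rw [he]; exact h
      simpa [eval_monomial, mul_assoc] using h2.const_mul c
  | add p q hp hq => simpa [add_mul] using hp.fun_add hq

lemma hasDerivAt_poly_g (p : ℝ[X]) (x : ℝ) :
    HasDerivAt (fun y => p.eval y * g y)
      ((derivative p - X * p).eval x * g x) x := by
  have hg : HasDerivAt g (g x * (-x)) x := by
    have h1 : HasDerivAt (fun y : ℝ => -(y ^ 2 / 2)) (-x) x := by
      simpa using ((hasDerivAt_pow 2 x).div_const 2).fun_neg
    exact h1.exp
  have hp := p.hasDerivAt x
  have : HasDerivAt (fun y => p.eval y * g y)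
      ((derivative p).eval x * g x + p.eval x * (g x * (-x))) x := hp.fun_mul hg
  convert this using 1
  simp only [eval_sub, eval_mul, eval_X]
  ring

lemma integral_XP_sub_derivP (p : ℝ[X]) :
    ∫ x, (X * p - derivative p).eval x * g x = 0 := by
  set q : ℝ[X] := derivative p - X * p with hq
  have hi : Integrable (fun x => q.eval x * g x) := integrable_poly_g q
  have hderiv : ∀ x : ℝ, HasDerivAt (fun y => p.eval y * g y) (q.eval x * g x) x :=
    fun x => hasDerivAt_poly_g p x
  have h1 : ∫ x in Set.Iic (0:ℝ), q.eval x * g x = p.eval 0 * g 0 - 0 :=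
    integral_Iic_of_hasDerivAt_of_tendsto' (fun x _ => hderiv x)
      hi.integrableOn (tendsto_poly_g_atBot p)
  have h2 : ∫ x in Set.Ioi (0:ℝ), q.eval x * g x = 0 - p.eval 0 * g 0 :=
    integral_Ioi_of_hasDerivAt_of_tendsto' (fun x _ => hderiv x)
      hi.integrableOn (tendsto_poly_g_atTop p)
  have h3 : ∫ x, q.eval x * g x = 0 := by
    rw [← integral_add_compl (measurableSet_Iic (a := (0:ℝ))) hi]
    rw [Set.compl_Iic, h1, h2]
    ring
  have h4 : ∀ x : ℝ, (X * p - derivative p).eval x * g x = -(q.eval x * g x) := by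
    intro x; simp only [hq, eval_sub, eval_mul, eval_X]; ring
  simp only [h4]
  rw [integral_neg, h3, neg_zero]

lemma integral_g : ∫ x, g x = Real.sqrt (2 * π) := by
  have h := integral_gaussian (1/2)
  simp only [← g_eq] at h
  rw [h]
  congr 1
  ring

lemma integral_H_mul_H (n m : ℕ) :
    ∫ x, (H n).eval x * (H m).eval x * g x
      = (if n = m then (n.factorial : ℝ) else 0) * Real.sqrt (2 * π) := by
  induction m generalizing n with
  | zero =>
      cases n with
      | zero => simp [H_zero, integral_g]
      | succ k =>
          have h := integral_XP_sub_derivP (H k)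
          rw [← H_succ] at h
          simp only [H_zero, eval_one, mul_one]
          rw [h]
          simp
  | succ m ih =>
      have key := integral_XP_sub_derivP (H n * H m)
      have hsplit : (X * (H n * H m) - derivative (H n * H m))
          = H n * H (m + 1) - derivative (H n) * H m := by
        rw [derivative_mul, H_succ]
        ring
      rw [hsplit] at key
      have hIa : Integrable (fun x => (H n * H (m+1)).eval x * g x) :=
        integrable_poly_g _
      have hIb : Integrable (fun x => (derivative (H n) * H m).eval x * g x) :=
        integrable_poly_g _
      have key2 : ∫ x, (H n * H (m+1)).eval x * g x
          = ∫ x, (derivative (H n) * H m).eval x * g x := by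
        have : (fun x => (H n * H (m+1) - derivative (H n) * H m).eval x * g x)
            = fun x => (H n * H (m+1)).eval x * g x
                - (derivative (H n) * H m).eval x * g x := by
          funext x; simp only [eval_sub]; ring
        rw [this, integral_sub hIa hIb] at key
        linarith
      have lhs_eq : ∫ x, (H n).eval x * (H (m+1)).eval x * g x
          = ∫ x, (H n * H (m+1)).eval x * g x := by
        congr 1; funext x; simp [eval_mul]
      rw [lhs_eq, key2]
      cases n with
      | zero =>
          simp [H_zero]
      | succ k =>
          have hd : derivative (H (k+1)) = C ((k:ℝ)+1) * H k := derivative_H k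
          have : (fun x => (derivative (H (k+1)) * H m).eval x * g x)
              = fun x => ((k:ℝ)+1) * ((H k).eval x * (H m).eval x * g x) := by
            funext x; rw [hd]; simp only [eval_mul, eval_C]; ring
          rw [this, integral_const_mul, ih k]
          by_cases hkm : k = m
          · subst hkm
            simp [Nat.factorial_succ]
            ring
          · have : ¬ (k + 1 = m + 1) := by omega
            simp [hkm, this]

lemma integral_poly_gaussian (p : ℝ[X]) :
    ∫ x, p.eval x ∂(gaussianReal 0 1)
      = (Real.sqrt (2 * π))⁻¹ * ∫ x, p.eval x * g x := by
  rw [gaussianReal_of_var_ne_zero _ one_ne_zero]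
  have hpdf : gaussianPDF 0 1 = fun x => ((gaussianPDFReal 0 1 x).toNNReal : ℝ≥0∞) := rfl
  rw [hpdf, integral_withDensity_eq_integral_smul
    ((measurable_gaussianPDFReal 0 1).real_toNNReal) (fun x => p.eval x)]
  rw [← integral_const_mul]
  congr 1
  funext x
  rw [NNReal.smul_def, Real.coe_toNNReal _ (gaussianPDFReal_nonneg 0 1 x)]
  rw [gaussianPDFReal, g]
  push_cast
  rw [smul_eq_mul]
  ring_nf

lemma expand_hermite : ∀ (d : ℕ) (p : ℝ[X]), p.natDegree ≤ d →
    ∃ c : ℕ → ℝ, p = ∑ i ∈ Finset.range (d + 1), C (c i) * H i := by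
  intro d
  induction d with
  | zero =>
      intro p hp
      refine ⟨fun _ => p.coeff 0, ?_⟩
      rw [Polynomial.eq_C_of_natDegree_le_zero hp]
      simp [H_zero]
  | succ d ih =>
      intro p hp
      set a := p.coeff (d + 1) with ha
      have hcoeffH : (H (d + 1)).coeff (d + 1) = 1 := by
        simpa [H] using coeff_hermite_self (d + 1)
      have hq : (p - C a * H (d + 1)).natDegree ≤ d := by
        refine natDegree_le_iff_coeff_eq_zero.2 fun N hN => ?_
        rcases eq_or_lt_of_le (Nat.succ_le_of_lt hN) with hN1 | hN2
        · rw [coeff_sub, coeff_C_mul, ← hN1, hcoeffH, mul_one, ha, sub_self]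
        · rw [coeff_sub, coeff_C_mul]
          rw [coeff_eq_zero_of_natDegree_lt (lt_of_le_of_lt hp hN2),
            coeff_eq_zero_of_natDegree_lt (by rw [natDegree_H]; exact hN2)]
          ring
      obtain ⟨c, hc⟩ := ih _ hq
      refine ⟨fun i => if i = d + 1 then a else c i, ?_⟩
      rw [Finset.sum_range_succ]
      have hterms : ∑ i ∈ Finset.range (d + 1),
          C (if i = d + 1 then a else c i) * H i
          = ∑ i ∈ Finset.range (d + 1), C (c i) * H i := by
        refine Finset.sum_congr rfl fun i hi => ?_
        have : i ≠ d + 1 := by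
          have := Finset.mem_range.1 hi; omega
        rw [if_neg this]
      rw [hterms, ← hc]
      simp
  
lemma integral_sq_gaussian (N : ℕ) (c : ℕ → ℝ) :
    ∫ x, ((∑ i ∈ Finset.range N, C (c i) * H i).eval x) ^ 2 ∂(gaussianReal 0 1)
      = ∑ i ∈ Finset.range N, (c i) ^ 2 * (i.factorial : ℝ) := by
  set p : ℝ[X] := ∑ i ∈ Finset.range N, C (c i) * H i with hpdef
  have h1 : ∀ x : ℝ, (p.eval x) ^ 2 = (p * p).eval x := by intro x; rw [eval_mul]; ring
  simp only [h1]
  rw [integral_poly_gaussian (p * p)]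
  have h2 : ∀ x : ℝ, (p * p).eval x * g x
      = ∑ i ∈ Finset.range N, ∑ j ∈ Finset.range N,
          (c i * c j) * ((H i).eval x * (H j).eval x * g x) := by
    intro x
    rw [hpdef]
    simp only [eval_mul, eval_finset_sum, eval_C, eval_mul]
    rw [Finset.sum_mul_sum, Finset.sum_mul]
    refine Finset.sum_congr rfl fun i _ => ?_
    rw [Finset.sum_mul]
    refine Finset.sum_congr rfl fun j _ => ?_
    ring
  simp only [h2]
  have hint : ∀ i j : ℕ, Integrable
      (fun x => (c i * c j) * ((H i).eval x * (H j).eval x * g x)) := by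
    intro i j
    have := (integrable_poly_g (H i * H j)).const_mul (c i * c j)
    refine this.congr ?_
    filter_upwards with x
    simp only [eval_mul]
    try ring
  rw [integral_finset_sum _ (fun i _ => integrable_finset_sum _ (fun j _ => hint i j))]
  have h3 : ∀ i ∈ Finset.range N, (∫ x, ∑ j ∈ Finset.range N,
      (c i * c j) * ((H i).eval x * (H j).eval x * g x))
      = (c i)^2 * (i.factorial : ℝ) * Real.sqrt (2*π) := by
    intro i hi
    rw [integral_finset_sum _ (fun j _ => hint i j)]
    have h4 : ∀ j ∈ Finset.range N, (∫ x, (c i * c j) * ((H i).eval x * (H j).eval x * g x))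
        = (if i = j then (c i)^2 * (i.factorial : ℝ) * Real.sqrt (2*π) else 0) := by
      intro j _
      rw [integral_const_mul, integral_H_mul_H]
      by_cases h : i = j
      · subst h; simp; ring
      · simp [h]
    rw [Finset.sum_congr rfl h4, Finset.sum_ite_eq (Finset.range N) i
      (fun _ => (c i)^2 * (i.factorial : ℝ) * Real.sqrt (2*π)), if_pos hi]
  rw [Finset.sum_congr rfl h3, ← Finset.sum_mul,
    mul_comm ((Real.sqrt (2*π))⁻¹), mul_assoc,
    mul_inv_cancel₀ (by positivity : Real.sqrt (2*π) ≠ 0), mul_one]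

end StmtAux

end StmtAux

open StmtAux in
theorem stmt_11 (d : ℕ) :
    (∀ p : Polynomial ℝ, p.natDegree ≤ d → p.eval 0 = 1 →
      (∑ i ∈ Finset.range (d + 1),
          (((Polynomial.hermite i).eval 0 : ℤ) : ℝ) ^ 2 / (Nat.factorial i : ℝ))⁻¹
        ≤ ∫ x, (p.eval x) ^ 2 ∂(gaussianReal 0 1)) ∧
    (∃ p : Polynomial ℝ, p.natDegree ≤ d ∧ p.eval 0 = 1 ∧
      ∫ x, (p.eval x) ^ 2 ∂(gaussianReal 0 1) =
        (∑ i ∈ Finset.range (d + 1),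
          (((Polynomial.hermite i).eval 0 : ℤ) : ℝ) ^ 2 / (Nat.factorial i : ℝ))⁻¹) := by
  classical
  set S := ∑ i ∈ Finset.range (d + 1),
      (((Polynomial.hermite i).eval 0 : ℤ) : ℝ) ^ 2 / (Nat.factorial i : ℝ) with hS
  have hfacpos : ∀ i : ℕ, (0:ℝ) < (i.factorial : ℝ) := fun i => by
    exact_mod_cast i.factorial_pos
  have hS0 : 0 < S := by
    rw [hS]
    refine Finset.sum_pos' (fun i _ => by positivity) ⟨0, Finset.mem_range.2 (Nat.succ_pos d), ?_⟩
    simp [hermite_zero]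
  constructor
  · intro p hdeg heval
    obtain ⟨c, hc⟩ := expand_hermite d p hdeg
    have hint := integral_sq_gaussian (d+1) c
    rw [← hc] at hint
    have hval : ∑ i ∈ Finset.range (d+1),
        c i * (((Polynomial.hermite i).eval 0 : ℤ) : ℝ) = 1 := by
      rw [← heval, hc]
      simp [eval_finset_sum, eval_H_zero]
    have hcs := Finset.sum_mul_sq_le_sq_mul_sq (Finset.range (d+1))
      (fun i => c i * Real.sqrt (i.factorial))
      (fun i => (((Polynomial.hermite i).eval 0 : ℤ) : ℝ) / Real.sqrt (i.factorial))
    have e1 : ∀ i ∈ Finset.range (d+1),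
        (c i * Real.sqrt (i.factorial))
          * ((((Polynomial.hermite i).eval 0 : ℤ) : ℝ) / Real.sqrt (i.factorial))
        = c i * (((Polynomial.hermite i).eval 0 : ℤ) : ℝ) := by
      intro i _
      have hs : Real.sqrt (i.factorial) ≠ 0 := by
        have := hfacpos i; positivity
      field_simp
    have e2 : ∀ i ∈ Finset.range (d+1),
        (c i * Real.sqrt (i.factorial)) ^ 2 = c i ^ 2 * (i.factorial : ℝ) := by
      intro i _
      rw [mul_pow, Real.sq_sqrt (le_of_lt (hfacpos i))]
    have e3 : ∀ i ∈ Finset.range (d+1),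
        ((((Polynomial.hermite i).eval 0 : ℤ) : ℝ) / Real.sqrt (i.factorial)) ^ 2
        = (((Polynomial.hermite i).eval 0 : ℤ) : ℝ) ^ 2 / (i.factorial : ℝ) := by
      intro i _
      rw [div_pow, Real.sq_sqrt (le_of_lt (hfacpos i))]
    rw [Finset.sum_congr rfl e1, Finset.sum_congr rfl e2, Finset.sum_congr rfl e3,
      hval, one_pow, ← hint, ← hS] at hcs
    have h2 := mul_le_mul_of_nonneg_right hcs (le_of_lt (inv_pos.2 hS0))
    rw [one_mul, mul_assoc, mul_inv_cancel₀ hS0.ne', mul_one] at h2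
    exact h2
  · refine ⟨∑ i ∈ Finset.range (d+1),
      Polynomial.C (S⁻¹ * (((Polynomial.hermite i).eval 0 : ℤ) : ℝ) / (i.factorial : ℝ))
        * H i, ?_, ?_, ?_⟩
    · refine Polynomial.natDegree_sum_le_of_forall_le _ _ fun i hi => ?_
      refine le_trans (Polynomial.natDegree_C_mul_le _ _) ?_
      rw [natDegree_H]
      exact Nat.lt_succ_iff.1 (Finset.mem_range.1 hi)
    · simp only [eval_finset_sum, Polynomial.eval_mul, Polynomial.eval_C, eval_H_zero]
      have e4 : ∀ i ∈ Finset.range (d+1),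
          S⁻¹ * (((Polynomial.hermite i).eval 0 : ℤ) : ℝ) / (i.factorial : ℝ)
            * (((Polynomial.hermite i).eval 0 : ℤ) : ℝ)
          = S⁻¹ * ((((Polynomial.hermite i).eval 0 : ℤ) : ℝ) ^ 2 / (i.factorial : ℝ)) := by
        intro i _; ring
      rw [Finset.sum_congr rfl e4, ← Finset.mul_sum, ← hS, inv_mul_cancel₀ hS0.ne']
    · rw [integral_sq_gaussian]
      have e5 : ∀ i ∈ Finset.range (d+1),
          (S⁻¹ * (((Polynomial.hermite i).eval 0 : ℤ) : ℝ) / (i.factorial : ℝ)) ^ 2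
            * (i.factorial : ℝ)
          = S⁻¹ * S⁻¹ * ((((Polynomial.hermite i).eval 0 : ℤ) : ℝ) ^ 2 / (i.factorial : ℝ)) := by
        intro i _
        have hfac := (hfacpos i).ne'
        field_simp
      rw [Finset.sum_congr rfl e5, ← Finset.mul_sum, ← hS, mul_assoc,
        inv_mul_cancel₀ hS0.ne', mul_one]
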